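/- Marginal cumulative distribution function of a UGAT coordinate: P(X_i ≤ x) = 1 − α_{i-1}^{x+1} · M(β+x+1, s, α)/M(β, s, α) for every x ∈ ℕ. -/

import Mathlib

open scoped BigOperators

/-- Normalization constant of the UGAT distribution. -/
noncomputable def M (r : ℕ) (β s : ℝ) (α : Fin r → ℝ) : ℝ :=
  ∑' ℓ : Fin r → ℕ, (∏ i, α i ^ ℓ i) / ((∑ i, (ℓ i : ℝ)) + β) ^ s

/-- The UGAT joint probability mass function. -/
noncomputable def ugatPmf (r : ℕ) (β s : ℝ) (α : Fin r → ℝ) (x : Fin r → ℕ) : ℝ :=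
  (∏ i, α i ^ x i) / (((∑ i, (x i : ℝ)) + β) ^ s * M r β s α)

open Function Set

lemma summable_prod_pow : ∀ (r : ℕ) (g : Fin r → ℝ), (∀ i, g i ∈ Set.Ioo (0:ℝ) 1) →
    Summable fun m : Fin r → ℕ => ∏ i, g i ^ m i
  | 0, g, _ => by
      haveI : Subsingleton (Fin 0 → ℕ) := ⟨fun a b => funext fun i => i.elim0⟩
      haveI : Finite (Fin 0 → ℕ) := Finite.of_subsingleton
      exact Summable.of_finite
  | (n+1), g, hg => by
      have ih := summable_prod_pow n (fun i => g i.succ) (fun i => hg i.succ)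
      have h0 : Summable fun a : ℕ => g 0 ^ a :=
        summable_geometric_of_lt_one (hg 0).1.le (hg 0).2
      have hmul := h0.mul_of_nonneg ih (fun a => pow_nonneg (hg 0).1.le a)
        (fun m => Finset.prod_nonneg fun j _ => pow_nonneg (hg j.succ).1.le _)
      refine ((Fin.consEquiv (fun _ : Fin (n+1) => ℕ)).summable_iff).mp ?_
      refine hmul.congr fun p => ?_
      simp [Fin.consEquiv, Fin.prod_univ_succ]

lemma ugat_summable (r : ℕ) (β s : ℝ) (hβ : 0 < β) (hs : 0 < s)
    (α : Fin r → ℝ) (hα : ∀ i, α i ∈ Set.Ioo (0 : ℝ) 1) :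
    Summable fun m : Fin r → ℕ => (∏ j, α j ^ m j) / ((∑ j, (m j : ℝ)) + β) ^ s := by
  have hβs : (0:ℝ) < β ^ s := Real.rpow_pos_of_pos hβ s
  refine Summable.of_nonneg_of_le (fun m => ?_) (fun m => ?_)
    ((summable_prod_pow r α hα).mul_right (β ^ s)⁻¹)
  · exact div_nonneg (Finset.prod_nonneg fun j _ => pow_nonneg (hα j).1.le _)
      (Real.rpow_nonneg (by positivity) s)
  · have hsum : (0:ℝ) ≤ ∑ j, (m j : ℝ) := Finset.sum_nonneg fun j _ => Nat.cast_nonneg _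
    have hle : β ^ s ≤ ((∑ j, (m j : ℝ)) + β) ^ s :=
      Real.rpow_le_rpow hβ.le (by linarith) hs.le
    rw [← div_eq_mul_inv]
    exact div_le_div_of_nonneg_left
      (Finset.prod_nonneg fun j _ => pow_nonneg (hα j).1.le _) hβs hle
      |>.trans_eq rfl

lemma M_pos (r : ℕ) (β s : ℝ) (hβ : 0 < β) (hs : 0 < s)
    (α : Fin r → ℝ) (hα : ∀ i, α i ∈ Set.Ioo (0 : ℝ) 1) : 0 < M r β s α := by
  refine Summable.tsum_pos (ugat_summable r β s hβ hs α hα) (fun m =>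
    div_nonneg (Finset.prod_nonneg fun j _ => pow_nonneg (hα j).1.le _)
      (Real.rpow_nonneg (add_nonneg (Finset.sum_nonneg fun j _ => Nat.cast_nonneg _) hβ.le) s)) (fun _ => 0) ?_
  · simp only [pow_zero, Finset.prod_const_one, Nat.cast_zero, Finset.sum_const_zero, zero_add]
    positivity

theorem ugat_marginal_cdf (r : ℕ) (hr : 1 ≤ r) (β s : ℝ) (hβ : 0 < β) (hs : 0 < s)
    (α : Fin r → ℝ) (hα : ∀ i, α i ∈ Set.Ioo (0 : ℝ) 1) (i : Fin r) (x : ℕ) :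
    (∑' m : {m : Fin r → ℕ // m i ≤ x}, ugatPmf r β s α m)
      = 1 - α i ^ (x + 1) * M r (β + x + 1) s α / M r β s α := by
  classical
  set f : (Fin r → ℕ) → ℝ := fun m => (∏ j, α j ^ m j) / ((∑ j, (m j : ℝ)) + β) ^ s with hf
  have hsummable : Summable f := ugat_summable r β s hβ hs α hα
  have hMβ : 0 < M r β s α := M_pos r β s hβ hs α hα
  have hβ' : (0:ℝ) < β + x + 1 := by positivity
  have hM' : M r β s α = ∑' m, f m := rfl
  set S : Set (Fin r → ℕ) := {m | m i ≤ x} with hS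
  -- the shift map
  set φ : (Fin r → ℕ) → (Fin r → ℕ) := fun m => Function.update m i (m i + (x+1)) with hφ
  have hinj : Function.Injective φ := by
    intro a b hab
    funext j
    by_cases hj : j = i
    · subst hj
      have := congrFun hab j
      simp only [hφ, Function.update_self] at this
      omega
    · have := congrFun hab j
      simpa [hφ, Function.update_of_ne hj] using this
  have hrange : Set.range φ = Sᶜ := by
    ext m
    simp only [Set.mem_range, Set.mem_compl_iff, hS, Set.mem_setOf_eq, not_le]
    constructor
    · rintro ⟨n, rfl⟩
      simp [hφ]
      omega
    · intro hm
      refine ⟨Function.update m i (m i - (x+1)), ?_⟩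
      funext j
      by_cases hj : j = i
      · subst hj; simp [hφ]; omega
      · simp [hφ, Function.update_of_ne hj]
  -- value of f on the shifted point
  have hfφ : ∀ n, f (φ n) = α i ^ (x+1) *
      ((∏ j, α j ^ n j) / ((∑ j, (n j : ℝ)) + (β + x + 1)) ^ s) := by
    intro n
    have hprod : (∏ j, α j ^ (φ n) j) = α i ^ (x+1) * ∏ j, α j ^ n j := by
      simp only [hφ]
      have he : ∏ j ∈ Finset.univ.erase i, α j ^ Function.update n i (n i + (x+1)) j
          = ∏ j ∈ Finset.univ.erase i, α j ^ n j :=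
        Finset.prod_congr rfl fun j hj => by
          rw [Function.update_of_ne (Finset.ne_of_mem_erase hj)]
      rw [← Finset.mul_prod_erase Finset.univ
          (fun j => α j ^ Function.update n i (n i + (x+1)) j) (Finset.mem_univ i),
        ← Finset.mul_prod_erase Finset.univ (fun j => α j ^ n j) (Finset.mem_univ i), he]
      simp only [Function.update_self, pow_add]
      ring
    have hsum : (∑ j, ((φ n) j : ℝ)) = (∑ j, (n j : ℝ)) + (x+1) := by
      simp only [hφ]
      have he : ∑ j ∈ Finset.univ.erase i, ((Function.update n i (n i + (x+1)) j : ℕ) : ℝ)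
          = ∑ j ∈ Finset.univ.erase i, ((n j : ℕ) : ℝ) :=
        Finset.sum_congr rfl fun j hj => by
          rw [Function.update_of_ne (Finset.ne_of_mem_erase hj)]
      rw [← Finset.add_sum_erase Finset.univ
          (fun j => ((Function.update n i (n i + (x+1)) j : ℕ) : ℝ)) (Finset.mem_univ i),
        ← Finset.add_sum_erase Finset.univ (fun j => ((n j : ℕ) : ℝ)) (Finset.mem_univ i), he]
      simp only [Function.update_self]
      push_cast
      ring
    simp only [hf, hprod, hsum]
    rw [mul_div_assoc]
    congr 2
    ring_nf
  -- sum over the complement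
  have hcompl : (∑' m : ↥Sᶜ, f m) = α i ^ (x+1) * M r (β + x + 1) s α := by
    rw [tsum_subtype]
    have hsupp : Function.support (Sᶜ.indicator f) ⊆ Set.range φ := by
      rw [hrange]; exact Set.support_indicator_subset
    rw [← hinj.tsum_eq hsupp]
    have : ∀ n, (Sᶜ.indicator f) (φ n) = f (φ n) := by
      intro n
      apply Set.indicator_of_mem
      rw [← hrange]; exact ⟨n, rfl⟩
    calc (∑' n, (Sᶜ.indicator f) (φ n)) = ∑' n : Fin r → ℕ, α i ^ (x+1) *
          ((∏ j, α j ^ n j) / ((∑ j, (n j : ℝ)) + (β + x + 1)) ^ s) := by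
          exact tsum_congr fun n => by rw [this n, hfφ n]
      _ = α i ^ (x+1) * M r (β + x + 1) s α := by rw [tsum_mul_left]; rfl
  -- decomposition
  have hdecomp : (∑' m : ↥S, f m) + (∑' m : ↥Sᶜ, f m) = M r β s α := by
    rw [hM']
    exact Summable.tsum_add_tsum_compl (hsummable.subtype S) (hsummable.subtype Sᶜ)
  have hSsum : (∑' m : ↥S, f m) = M r β s α - α i ^ (x+1) * M r (β + x + 1) s α := by
    rw [← hdecomp, hcompl]; ring
  have hpmf : ∀ m : Fin r → ℕ, ugatPmf r β s α m = f m / M r β s α := by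
    intro m
    rw [ugatPmf, hf, div_div]
  calc (∑' m : {m : Fin r → ℕ // m i ≤ x}, ugatPmf r β s α m)
      = ∑' m : ↥S, f m / M r β s α := tsum_congr fun m => hpmf m
    _ = (∑' m : ↥S, f m) / M r β s α := tsum_div_const
    _ = 1 - α i ^ (x + 1) * M r (β + x + 1) s α / M r β s α := by
        rw [hSsum, sub_div, div_self hMβ.ne']
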